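/- Let n ≥ 2 be a natural number and let C be a real number such that for all nonnegative real numbers x_1, ..., x_n one has (x_1 + ... + x_n)/n - (x_1 x_2 ... x_n)^(1/n) ≥ C · ∑_{1 ≤ i < j ≤ n} (√(x_i) - √(x_j))^2. Then C ≤ 1/(n(n-1)). -/

import Mathlib

open Finset Real

/-- Optimality of the constant `1/(n(n-1))` in (3.1): if
`(x_1 + ⋯ + x_n)/n - (x_1 ⋯ x_n)^(1/n) ≥ C ∑_{i<j} (√(x i) - √(x j))^2` holds for all
nonnegative `x i`, then `C ≤ 1/(n(n-1))`. -/
theorem second_strong_cauchy_constant_optimal (n : ℕ) (hn : 2 ≤ n) (C : ℝ)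
    (h : ∀ x : Fin n → ℝ, (∀ i, 0 ≤ x i) →
      (∑ i, x i) / n - (∏ i, x i) ^ ((1 : ℝ) / n) ≥
        C * ∑ i, ∑ j ∈ Finset.Ioi i, (Real.sqrt (x i) - Real.sqrt (x j)) ^ 2) :
    C ≤ 1 / (n * (n - 1)) := by
  by_contra hC
  push_neg at hC
  have hN2 : (2:ℝ) ≤ (n:ℝ) := by exact_mod_cast hn
  have hN1 : (0:ℝ) < (n:ℝ) - 1 := by linarith
  have hN0 : (0:ℝ) < (n:ℝ) := by linarith
  set D : ℝ := C * ((n:ℝ) - 1) with hDdef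
  have hD : 1 / (n:ℝ) < D := by
    have h1 : 1 / ((n:ℝ) * ((n:ℝ)-1)) < C := hC
    have h2 := mul_lt_mul_of_pos_right h1 hN1
    rw [div_mul_eq_mul_div, one_mul] at h2
    calc 1/(n:ℝ) = ((n:ℝ)-1)/((n:ℝ)*((n:ℝ)-1)) := by field_simp
    _ < C * ((n:ℝ)-1) := h2
  have hDpos : 0 < D := lt_trans (by positivity) hD
  set e : ℝ := D - 1/(n:ℝ) with hedef
  have he : 0 < e := by rw [hedef]; linarith
  set s : ℝ := 2*D/e + 1 with hsdef
  have hs1 : 1 ≤ s := by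
    rw [hsdef]
    have h0 : 0 ≤ 2*D/e := by positivity
    linarith
  have hs0 : 0 ≤ s := by linarith
  set t : ℝ := s^2 with htdef
  have ht1 : 1 ≤ t := by nlinarith
  let i0 : Fin n := ⟨0, by omega⟩
  set x : Fin n → ℝ := fun i => if i = i0 then t else 1 with hxdef
  have hxnn : ∀ i, 0 ≤ x i := by
    intro i
    by_cases hi : i = i0 <;> simp [hxdef, hi] <;> linarith
  have hsum : ∑ i, x i = t - 1 + n := by
    have : ∀ i, x i = (if i = i0 then t - 1 else 0) + 1 := by
      intro i; by_cases hi : i = i0 <;> simp [hxdef, hi]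
    rw [Finset.sum_congr rfl (fun i _ => this i), Finset.sum_add_distrib,
      Finset.sum_ite_eq' Finset.univ i0 (fun _ => t - 1)]
    simp [Finset.card_univ]
  have hprod : ∏ i, x i = t := by
    rw [hxdef]
    rw [Finset.prod_ite_eq' Finset.univ i0 (fun _ => t)]
    simp
  have hrpow : (1:ℝ) ≤ (∏ i, x i) ^ ((1 : ℝ) / n) := by
    rw [hprod]
    exact Real.one_le_rpow ht1 (by positivity)
  have hne : ∀ i : Fin n, i ≠ i0 → x i = 1 := by
    intro i hi; simp [hxdef, hi]
  have hIoi : ∀ j : Fin n, j ∈ Finset.Ioi i0 → j ≠ i0 := by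
    intro j hj
    rw [Finset.mem_Ioi] at hj
    exact ne_of_gt hj
  have hdsum : ∑ i, ∑ j ∈ Finset.Ioi i, (Real.sqrt (x i) - Real.sqrt (x j)) ^ 2
      = ((n:ℝ) - 1) * (s - 1)^2 := by
    rw [Finset.sum_eq_single_of_mem i0 (Finset.mem_univ i0)]
    · have hterm : ∀ j ∈ Finset.Ioi i0,
          (Real.sqrt (x i0) - Real.sqrt (x j)) ^ 2 = (s - 1)^2 := by
        intro j hj
        rw [hne j (hIoi j hj)]
        have : x i0 = t := by simp [hxdef]
        rw [this, htdef, Real.sqrt_sq hs0, Real.sqrt_one]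
      rw [Finset.sum_congr rfl hterm, Finset.sum_const, nsmul_eq_mul]
      have hcard : (Finset.Ioi i0).card = n - 1 := by
        rw [Fin.card_Ioi]
        simp [i0]
      rw [hcard, Nat.cast_sub (by omega : 1 ≤ n), Nat.cast_one]
    · intro i _ hi
      apply Finset.sum_eq_zero
      intro j hj
      have hji : j ≠ i0 := by
        rw [Finset.mem_Ioi] at hj
        intro hcon
        rw [hcon] at hj
        exact absurd (Fin.le_def.mpr (Nat.zero_le i.val)) (not_le.mpr hj)
      rw [hne i hi, hne j hji]
      simp
  have hkey := h x hxnn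
  rw [hsum, hdsum] at hkey
  -- hkey : (t - 1 + n)/n - (∏ x)^(1/n) ≥ C * ((n-1)*(s-1)^2)
  have hineq : (t - 1 + (n:ℝ))/(n:ℝ) - 1 ≥ D * (s-1)^2 := by
    have : C * (((n:ℝ) - 1) * (s - 1)^2) = D * (s-1)^2 := by rw [hDdef]; ring
    rw [this] at hkey
    linarith [hrpow]
  -- now derive contradiction: with s = 2D/e + 1, D(s-1)^2 > (t-1+n)/n - 1
  have hes : e * s = 2*D + e := by
    rw [hsdef]; field_simp
  have hs1' : s - 1 = 2*D/e := by rw [hsdef]; ring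
  have hsgt : 0 < s - 1 := by rw [hs1']; positivity
  have hkey2 : e*(s-1) = 2*D := by
    rw [hs1']; field_simp
  have h_ne : (n:ℝ)*e = (n:ℝ)*D - 1 := by rw [hedef]; field_simp
  have hp : (s-1) * (e*(s-1)) = (s-1)*(2*D) := by rw [hkey2]
  have hq : (n:ℝ) * ((s-1)*(e*(s-1))) = (n:ℝ)*((s-1)*(2*D)) := by rw [hkey2]
  have hfinal : D * (s-1)^2 > (t - 1 + (n:ℝ))/(n:ℝ) - 1 := by
    rw [htdef]
    have h1 : (s^2 - 1 + (n:ℝ))/(n:ℝ) - 1 = (s^2-1)/(n:ℝ) := by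
      field_simp
      ring
    rw [h1, gt_iff_lt, div_lt_iff₀ hN0]
    nlinarith [hp, hq, h_ne, hsgt, hN0, mul_pos hsgt (mul_pos hN0 he), mul_pos hsgt hsgt]
  linarith
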